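/- The smoothed normalization operator is continuous: the map P : ℝ² → ℝ² is continuous on all of ℝ², in particular at the origin (where P(0) = 0) and across the sphere ‖x‖ = ℓ. -/

import Mathlib

open scoped Classical

noncomputable section

/-- The smoothed normalization operator `P : ℝ² → ℝ²` with parameters `k, ℓ > 0`:
`P(x) = x/‖x‖` if `‖x‖ > ℓ`,
`P(x) = sin( (π / (2·arctan(kℓ))) · arctan(k‖x‖) ) · x/‖x‖` if `0 < ‖x‖ ≤ ℓ`,
and `P(0) = 0`. -/

def smoothP (k ℓ : ℝ) (x : EuclideanSpace ℝ (Fin 2)) : EuclideanSpace ℝ (Fin 2) :=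
  if x = 0 then 0
  else if ℓ < ‖x‖ then ‖x‖⁻¹ • x
  else Real.sin (Real.pi / (2 * Real.arctan (k * ℓ)) * Real.arctan (k * ‖x‖)) •
    (‖x‖⁻¹ • x)

/-- The smoothed normalization operator is continuous on all of `ℝ²`. -/
theorem smoothP_continuous (k ℓ : ℝ) (hk : 0 < k) (hℓ : 0 < ℓ) :
    Continuous (smoothP k ℓ) := by
  have ha : Real.arctan (k * ℓ) ≠ 0 := by
    have h0 : Real.arctan 0 < Real.arctan (k * ℓ) :=
      Real.arctan_strictMono (by positivity)
    rw [Real.arctan_zero] at h0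
    exact h0.ne'
  set c := Real.pi / (2 * Real.arctan (k * ℓ)) with hc
  set s : EuclideanSpace ℝ (Fin 2) → ℝ :=
    fun x => Real.sin (c * Real.arctan (k * min ‖x‖ ℓ)) with hs
  have hscont : Continuous s := by
    have h1 : Continuous fun x : EuclideanSpace ℝ (Fin 2) => k * min ‖x‖ ℓ :=
      continuous_const.mul (continuous_norm.min continuous_const)
    exact Real.continuous_sin.comp (continuous_const.mul (Real.continuous_arctan.comp h1))
  have hs0 : s 0 = 0 := by simp [hs, min_eq_left hℓ.le]
  have hfun : smoothP k ℓ = fun x => s x • (‖x‖⁻¹ • x) := by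
    funext x
    unfold smoothP
    by_cases hx : x = 0
    · simp [hx, hs0]
    · by_cases hl : ℓ < ‖x‖
      · have hmin : min ‖x‖ ℓ = ℓ := min_eq_right hl.le
        have : c * Real.arctan (k * ℓ) = Real.pi / 2 := by
          field_simp [hc]
          rw [hc]; field_simp
        simp [hx, hl, hs, hmin, this, Real.sin_pi_div_two]
      · have hmin : min ‖x‖ ℓ = ‖x‖ := min_eq_left (not_lt.1 hl)
        simp [hx, hl, hs, hmin]
        rw [hc]
  rw [hfun, continuous_iff_continuousAt]
  intro x
  by_cases hx : x = 0
  · subst hx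
    have key : Filter.Tendsto (fun x : EuclideanSpace ℝ (Fin 2) => s x • (‖x‖⁻¹ • x))
        (nhds 0) (nhds 0) := by
      apply squeeze_zero_norm (a := fun x => |s x|)
      · intro x
        rw [norm_smul, norm_smul, norm_inv, norm_norm, Real.norm_eq_abs]
        by_cases hx : x = 0
        · simp [hx]
        · rw [inv_mul_cancel₀ (norm_ne_zero_iff.2 hx), mul_one]
      · have := (hscont.abs.tendsto 0)
        simpa [hs0] using this
    simpa [ContinuousAt, hs0] using key
  · exact (hscont.continuousAt).smul
      (((continuous_norm.continuousAt).inv₀ (norm_ne_zero_iff.2 hx)).smul continuousAt_id)
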